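/- Consider the symmetric dimorphic system with traits x and -x, μ = 0, α(x,x) = 1, functions λ, p, σ even. Then n₁ᵃ = n₂ᵃ = (λ(x) - μ(x))/((1 + α(-x,x))(1-p(x))) and n₁ᵈ = n₂ᵈ = (λ(x)-μ(x))² p(x)/(σ(x)(1+α(-x,x))(1-p(x))²) is a coordinatewise nonnegative equilibrium of the dimorphic dynamical system. -/

import Mathlib

/-- The symmetric dimorphic equilibrium: with traits `x` and `-x`, `μ = 0`,
`α(x,x) = 1`, the explicit symmetric pair of active/dormant sizes is a
coordinatewise nonnegative equilibrium of the dimorphic system. -/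
theorem symmetric_dimorphic_equilibrium
    (lamx px sigx axy : ℝ)
    (hlam : 0 < lamx) (hp0 : 0 ≤ px) (hp1 : px < 1) (hsig : 0 < sigx)
    (haxy : 0 ≤ axy) :
    let na := lamx / ((1 + axy) * (1 - px))
    let nd := lamx ^ 2 * px / (sigx * (1 + axy) * (1 - px) ^ 2)
    0 ≤ na ∧ 0 ≤ nd ∧
    na * (lamx - na - axy * na) + sigx * nd = 0 ∧
    px * na * (na + axy * na) - sigx * nd = 0 := by
  intro na nd
  have h1 : (0:ℝ) < 1 + axy := by linarith
  have h2 : (0:ℝ) < 1 - px := by linarith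
  have hden : ((1 + axy) * (1 - px)) ≠ 0 := by positivity
  have hden2 : (sigx * (1 + axy) * (1 - px) ^ 2) ≠ 0 := by positivity
  refine ⟨by positivity, by positivity, ?_, ?_⟩ <;>
  · show _ = _
    simp only [na, nd]
    field_simp
    ring
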